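/- Let q > 1, C > 0, F ∈ L¹(0,T) nonnegative, and let y ∈ C([0,T]) be nonnegative with y(0) = 0 and satisfy y(t) ≤ C q ∫₀ᵗ F(s) y(s)^{1 - 1/q} ds for all t ∈ [0,T]. Then y(t) ≤ (C ∫₀ᵗ F(s) ds)^q for all t ∈ [0,T]. -/

import Mathlib

open MeasureTheory Set intervalIntegral
open scoped ENNReal NNReal
open Filter Topology

-- the pushforward lemma
lemma map_primitive {F : ℝ → ℝ} (hint : Integrable F) (hnn : ∀ s, 0 ≤ F s) {t : ℝ} (ht : 0 ≤ t) :
    Measure.map (fun s => ∫ u in (0:ℝ)..s, F u)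
      ((volume.restrict (Ioc 0 t)).withDensity (fun s => ((F s).toNNReal : ℝ≥0∞)))
      = volume.restrict (Ioc 0 (∫ u in (0:ℝ)..t, F u)) := by
  set G : ℝ → ℝ := fun s => ∫ u in (0:ℝ)..s, F u with hGdef
  have hGc : Continuous G :=
    intervalIntegral.continuous_primitive (fun a b => hint.intervalIntegrable) 0
  have hGmono : Monotone G := by
    intro a b hab
    have h1 : G a + ∫ u in a..b, F u = G b :=
      intervalIntegral.integral_add_adjacent_intervals hint.intervalIntegrable
        hint.intervalIntegrable
    have h2 : (0:ℝ) ≤ ∫ u in a..b, F u :=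
      intervalIntegral.integral_nonneg hab (fun u _ => hnn u)
    linarith
  have hG0 : G 0 = 0 := intervalIntegral.integral_same
  have hGnn : ∀ s, 0 ≤ s → 0 ≤ G s := fun s hs => hG0 ▸ hGmono hs
  set μ := (volume.restrict (Ioc 0 t)).withDensity (fun s => ((F s).toNNReal : ℝ≥0∞)) with hμdef
  have hμapp : ∀ A : Set ℝ, MeasurableSet A → μ A = ∫⁻ s in A ∩ Ioc 0 t, ENNReal.ofReal (F s) := by
    intro A hA
    rw [hμdef, withDensity_apply _ hA, Measure.restrict_restrict hA]
    rfl
  have hIocval : ∀ s, 0 ≤ s →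
      ∫⁻ u in Ioc 0 s, ENNReal.ofReal (F u) = ENNReal.ofReal (G s) := by
    intro s hs
    rw [← ofReal_integral_eq_lintegral_ofReal (hint.integrableOn)
      (Filter.Eventually.of_forall (fun u => hnn u))]
    congr 1
    rw [hGdef]
    exact (intervalIntegral.integral_of_le hs).symm
  have hfin : IsFiniteMeasure μ := by
    constructor
    rw [hμapp _ MeasurableSet.univ, univ_inter]
    calc ∫⁻ s in Ioc 0 t, ENNReal.ofReal (F s) ≤ ∫⁻ s, ENNReal.ofReal (F s) :=
          setLIntegral_le_lintegral _ _
      _ < ⊤ := hint.lintegral_lt_top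
  have hmapfin : IsFiniteMeasure (Measure.map G μ) := by
    constructor
    rw [Measure.map_apply hGc.measurable MeasurableSet.univ]
    exact measure_lt_top μ _
  refine Measure.ext_of_Iic _ _ (fun a => ?_)
  rw [Measure.map_apply hGc.measurable measurableSet_Iic,
    Measure.restrict_apply measurableSet_Iic]
  rcases lt_or_ge a 0 with ha | ha
  · have h1 : G ⁻¹' Iic a ∩ Ioc 0 t = ∅ := by
      ext s
      simp only [mem_inter_iff, mem_preimage, mem_Iic, mem_Ioc, mem_empty_iff_false,
        iff_false, not_and, and_imp]
      intro hGa hs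
      exact absurd hGa (not_le.2 (ha.trans_le (hGnn s hs.le)))
    have h2 : Iic a ∩ Ioc 0 (G t) = ∅ := by
      ext x
      simp only [mem_inter_iff, mem_Iic, mem_Ioc, mem_empty_iff_false, iff_false, not_and, and_imp]
      intro hxa hx
      exact absurd hxa (not_le.2 (ha.trans_le hx.le))
    rw [hμapp _ (hGc.measurable measurableSet_Iic), h1, h2]
    simp
  · set S : Set ℝ := {s ∈ Icc 0 t | G s ≤ a} with hSdef
    have hS0 : (0:ℝ) ∈ S := ⟨⟨le_refl 0, ht⟩, by simp [hG0, ha]⟩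
    have hSne : S.Nonempty := ⟨0, hS0⟩
    have hSbdd : BddAbove S := ⟨t, fun s hs => hs.1.2⟩
    have hSclosed : IsClosed S := by
      have : S = Icc 0 t ∩ G ⁻¹' Iic a := by
        ext s
        simp only [hSdef, mem_setOf_eq, mem_inter_iff, mem_preimage, mem_Iic]
      rw [this]
      exact isClosed_Icc.inter (isClosed_Iic.preimage hGc)
    set s₀ := sSup S with hs₀def
    have hs₀mem : s₀ ∈ S := hSclosed.csSup_mem hSne hSbdd
    have hs₀0 : 0 ≤ s₀ := hs₀mem.1.1
    have hs₀t : s₀ ≤ t := hs₀mem.1.2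
    have hset : G ⁻¹' Iic a ∩ Ioc 0 t = Ioc 0 s₀ := by
      ext s
      simp only [mem_inter_iff, mem_preimage, mem_Iic, mem_Ioc]
      constructor
      · rintro ⟨hGa, hs1, hs2⟩
        exact ⟨hs1, le_csSup hSbdd ⟨⟨hs1.le, hs2⟩, hGa⟩⟩
      · rintro ⟨hs1, hs2⟩
        exact ⟨le_trans (hGmono hs2) hs₀mem.2, hs1, hs2.trans hs₀t⟩
    have hval : G s₀ = min a (G t) := by
      rcases eq_or_lt_of_le hs₀t with h | h
      · rw [h]
        exact (min_eq_right (h ▸ hs₀mem.2)).symm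
      · have hga : a ≤ G s₀ := by
          by_contra hcon
          push_neg at hcon
          have hev : ∀ᶠ s in 𝓝[>] s₀, G s < a :=
            eventually_nhdsWithin_of_eventually_nhds
              ((hGc.continuousAt).eventually_lt_const hcon)
          have hev2 : ∀ᶠ s in 𝓝[>] s₀, s ≤ t := by
            filter_upwards [Ioo_mem_nhdsGT_of_mem ⟨le_refl s₀, h⟩] with s hs
            exact hs.2.le
          have : ∃ s, (G s < a ∧ s ≤ t) ∧ s₀ < s := by
            have hne : Filter.NeBot (𝓝[>] s₀) := nhdsGT_neBot s₀
            exact ((hev.and hev2).and self_mem_nhdsWithin).exists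
          obtain ⟨s, ⟨hsa, hst⟩, hss⟩ := this
          have : s ∈ S := ⟨⟨hs₀0.trans hss.le, hst⟩, hsa.le⟩
          exact absurd (le_csSup hSbdd this) (not_le.2 hss)
        have : G s₀ = a := le_antisymm hs₀mem.2 hga
        rw [this]
        exact (min_eq_left (hga.trans (hGmono hs₀t))).symm
    have hIeq : Iic a ∩ Ioc 0 (G t) = Ioc 0 (min a (G t)) := by
      ext x
      simp only [mem_inter_iff, mem_Iic, mem_Ioc, le_min_iff]
      tauto
    rw [hμapp _ (hGc.measurable measurableSet_Iic), hset, hIocval s₀ hs₀0, hval]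
    show ENNReal.ofReal (min a (G t)) = volume (Iic a ∩ Ioc 0 (G t))
    rw [hIeq, Real.volume_Ioc]
    congr 1
    ring

lemma integral_primitive {F : ℝ → ℝ} (hint : Integrable F) (hnn : ∀ s, 0 ≤ F s) {t : ℝ}
    (ht : 0 ≤ t) {h : ℝ → ℝ} (hh : Measurable h) :
    ∫ s in Ioc 0 t, F s * h (∫ u in (0:ℝ)..s, F u)
      = ∫ x in Ioc 0 (∫ u in (0:ℝ)..t, F u), h x := by
  set G : ℝ → ℝ := fun s => ∫ u in (0:ℝ)..s, F u with hGdef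
  have hGc : Continuous G :=
    intervalIntegral.continuous_primitive (fun a b => hint.intervalIntegrable) 0
  have : (∫ x in Ioc 0 (∫ u in (0:ℝ)..t, F u), h x)
      = ∫ x, h x ∂(Measure.map G ((volume.restrict (Ioc 0 t)).withDensity
          (fun s => ((F s).toNNReal : ℝ≥0∞)))) := by
    rw [map_primitive hint hnn ht]
  have hFm : AEMeasurable (fun s => (F s).toNNReal) (volume.restrict (Ioc 0 t)) :=
    measurable_real_toNNReal.comp_aemeasurable hint.aestronglyMeasurable.aemeasurable.restrict
  rw [this, integral_map hGc.measurable.aemeasurable hh.aestronglyMeasurable,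
    integral_withDensity_eq_integral_smul₀ hFm _]
  apply MeasureTheory.integral_congr_ae
  filter_upwards with s
  rw [NNReal.smul_def, Real.coe_toNNReal _ (hnn s), smul_eq_mul]

lemma integral_affine_rpow {C δ q : ℝ} (hC : 0 < C) (hδ : 0 < δ) (hq : 1 < q) {A : ℝ}
    (hA : 0 ≤ A) :
    ∫ x in Ioc (0:ℝ) A, (C * x + δ) ^ (q - 1) = ((C * A + δ) ^ q - δ ^ q) / (C * q) := by
  have huA : uIcc (0:ℝ) A = Icc 0 A := uIcc_of_le hA
  have hq0 : (0:ℝ) < q := lt_trans one_pos hq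
  have hderiv : ∀ x ∈ uIcc (0:ℝ) A,
      HasDerivAt (fun x => (C * x + δ) ^ q / (C * q)) ((C * x + δ) ^ (q - 1)) x := by
    intro x hx
    rw [huA] at hx
    have hpos : 0 < C * x + δ := by nlinarith [hx.1]
    have inner : HasDerivAt (fun x => C * x + δ) C x := by
      simpa using ((hasDerivAt_id x).const_mul C).add_const δ
    have h2 := (inner.rpow_const (p := q) (Or.inl (ne_of_gt hpos))).div_const (C * q)
    have hCq : C * q ≠ 0 := by positivity
    exact h2.congr_deriv (mul_div_cancel_left₀ _ hCq)
  have hcont : ContinuousOn (fun x => (C * x + δ) ^ (q - 1)) (uIcc (0:ℝ) A) := by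
    apply ContinuousOn.rpow_const
    · exact ((continuous_const.mul continuous_id).add continuous_const).continuousOn
    · intro x hx
      rw [huA] at hx
      have hpos : 0 < C * x + δ := by nlinarith [hx.1]
      exact Or.inl (ne_of_gt hpos)
  rw [← intervalIntegral.integral_of_le hA,
    intervalIntegral.integral_eq_sub_of_hasDerivAt hderiv
      (hcont.intervalIntegrable)]
  have hz : C * 0 + δ = δ := by ring
  rw [hz, div_sub_div_same]

/-- Bihari-type generalization of Grönwall's inequality: if `y` is nonnegative,
continuous, `y 0 = 0` and `y t ≤ C q ∫₀ᵗ F s * y s ^ (1 - 1/q) ds`, then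
`y t ≤ (C ∫₀ᵗ F s ds) ^ q`. -/
theorem stmt3 (T q C : ℝ) (hT : 0 < T) (hq : 1 < q) (hC : 0 < C)
    (F : ℝ → ℝ) (hF : MeasureTheory.IntegrableOn F (Set.Ioc 0 T))
    (hFpos : ∀ s ∈ Set.Ioc (0 : ℝ) T, 0 ≤ F s)
    (y : ℝ → ℝ) (hy : ContinuousOn y (Set.Icc 0 T))
    (hypos : ∀ t ∈ Set.Icc (0 : ℝ) T, 0 ≤ y t) (hy0 : y 0 = 0)
    (hineq : ∀ t ∈ Set.Icc (0 : ℝ) T,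
      y t ≤ C * q * ∫ s in (0 : ℝ)..t, F s * y s ^ (1 - 1 / q)) :
    ∀ t ∈ Set.Icc (0 : ℝ) T, y t ≤ (C * ∫ s in (0 : ℝ)..t, F s) ^ q := by
  have hq0 : (0:ℝ) < q := lt_trans one_pos hq
  have hθ0 : (0:ℝ) ≤ 1 - 1/q := by
    have : 1/q < 1 := by rw [div_lt_one hq0]; exact hq
    linarith
  set F' : ℝ → ℝ := (Ioc 0 T).indicator F with hF'def
  have hF'int : Integrable F' := (integrable_indicator_iff measurableSet_Ioc).2 hF
  have hF'nn : ∀ s, 0 ≤ F' s := by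
    intro s
    rw [hF'def]
    by_cases hs : s ∈ Ioc 0 T
    · rw [indicator_of_mem hs]; exact hFpos s hs
    · rw [indicator_of_notMem hs]
  set G : ℝ → ℝ := fun s => ∫ u in (0:ℝ)..s, F' u with hGdef
  have hGc : Continuous G :=
    intervalIntegral.continuous_primitive (fun a b => hF'int.intervalIntegrable) 0
  have hGmono : Monotone G := by
    intro a b hab
    have h1 : G a + ∫ u in a..b, F' u = G b :=
      intervalIntegral.integral_add_adjacent_intervals hF'int.intervalIntegrable
        hF'int.intervalIntegrable
    have h2 : (0:ℝ) ≤ ∫ u in a..b, F' u :=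
      intervalIntegral.integral_nonneg hab (fun u _ => hF'nn u)
    linarith
  have hG0 : G 0 = 0 := intervalIntegral.integral_same
  have hGnn : ∀ s, 0 ≤ s → 0 ≤ G s := fun s hs => hG0 ▸ hGmono hs
  have hGF : ∀ t ∈ Icc (0:ℝ) T, G t = ∫ s in (0:ℝ)..t, F s := by
    intro t ht
    rw [hGdef]
    simp only
    rw [intervalIntegral.integral_of_le ht.1, intervalIntegral.integral_of_le ht.1]
    apply setIntegral_congr_fun measurableSet_Ioc
    intro s hs
    exact indicator_of_mem (Ioc_subset_Ioc_right ht.2 hs) F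
  -- the key bound with a positive shift δ
  have key : ∀ δ : ℝ, 0 < δ → ∀ t ∈ Icc (0:ℝ) T, y t ≤ (C * G t + δ) ^ q := by
    intro δ hδ
    by_contra hcon
    push_neg at hcon
    obtain ⟨t₁, ht₁, hyt₁⟩ := hcon
    set S := {t | t ∈ Icc (0:ℝ) T ∧ (C * G t + δ) ^ q ≤ y t} with hSdef
    have hSne : S.Nonempty := ⟨t₁, ht₁, hyt₁.le⟩
    have hSbdd : BddBelow S := ⟨0, fun s hs => hs.1.1⟩
    have hSsub : S ⊆ Icc (0:ℝ) T := fun s hs => hs.1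
    set t₀ := sInf S with ht₀def
    have ht₀Icc : t₀ ∈ Icc (0:ℝ) T :=
      ⟨le_csInf hSne (fun s hs => hs.1.1), le_trans (csInf_le hSbdd ⟨ht₁, hyt₁.le⟩) ht₁.2⟩
    have hφc : Continuous (fun t => (C * G t + δ) ^ q) :=
      ((continuous_const.mul hGc).add continuous_const).rpow_const (fun x => Or.inr hq0.le)
    have ht₀S : (C * G t₀ + δ) ^ q ≤ y t₀ := by
      have hclo : t₀ ∈ closure S := csInf_mem_closure hSne hSbdd
      have hne : (𝓝[S] t₀).NeBot := mem_closure_iff_nhdsWithin_neBot.1 hclo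
      have hyc : Filter.Tendsto y (𝓝[S] t₀) (𝓝 (y t₀)) := (hy t₀ ht₀Icc).mono hSsub
      have hφc' : Filter.Tendsto (fun t => (C * G t + δ) ^ q) (𝓝[S] t₀)
          (𝓝 ((C * G t₀ + δ) ^ q)) := (hφc.continuousAt).continuousWithinAt
      refine le_of_tendsto_of_tendsto hφc' hyc ?_
      filter_upwards [self_mem_nhdsWithin] with s hs
      exact hs.2
    have ht₀pos : 0 < t₀ := by
      rcases eq_or_lt_of_le ht₀Icc.1 with h | h
      · exfalso
        rw [← h] at ht₀S
        rw [hy0, hG0] at ht₀S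
        have : (0:ℝ) < (C * 0 + δ) ^ q := by
          rw [mul_zero, zero_add]
          exact Real.rpow_pos_of_pos hδ q
        linarith
      · exact h
    have hlt : ∀ s ∈ Ioo (0:ℝ) t₀, y s < (C * G s + δ) ^ q := by
      intro s hs
      by_contra hcs
      push_neg at hcs
      have : s ∈ S := ⟨⟨hs.1.le, hs.2.le.trans ht₀Icc.2⟩, hcs⟩
      exact absurd (csInf_le hSbdd this) (not_le.2 hs.2)
    obtain ⟨My, hMy⟩ := isCompact_Icc.exists_bound_of_continuousOn hy
    have hMy0 : 0 ≤ My := le_trans (norm_nonneg _) (hMy 0 (Set.mem_Icc.2 ⟨le_refl 0, hT.le⟩))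
    have hyaesm : AEStronglyMeasurable (fun s => y s ^ (1 - 1/q)) (volume.restrict (Ioo 0 t₀)) := by
      have h1 : ContinuousOn (fun s => y s ^ (1 - 1/q)) (Icc 0 T) :=
        hy.rpow_const (fun x _ => Or.inr hθ0)
      exact (h1.aestronglyMeasurable measurableSet_Icc).mono_measure
        (Measure.restrict_mono (fun s hs => Set.mem_Icc.2 ⟨hs.1.le, hs.2.le.trans ht₀Icc.2⟩) le_rfl)
    have hFIoo : IntegrableOn F (Ioo 0 t₀) :=
      hF.mono (fun s hs => Set.mem_Ioc.2 ⟨hs.1, hs.2.le.trans ht₀Icc.2⟩) le_rfl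
    have hf1int : IntegrableOn (fun s => F s * y s ^ (1 - 1/q)) (Ioo 0 t₀) := by
      apply Integrable.mono' (hFIoo.norm.const_mul (My ^ (1 - 1/q)))
        (hFIoo.aestronglyMeasurable.mul hyaesm)
      filter_upwards [ae_restrict_mem measurableSet_Ioo] with s hs
      have hsIcc : s ∈ Icc (0:ℝ) T := ⟨hs.1.le, hs.2.le.trans ht₀Icc.2⟩
      have h1 : y s ^ (1 - 1/q) ≤ My ^ (1 - 1/q) :=
        Real.rpow_le_rpow (hypos s hsIcc) (le_trans (le_abs_self _) (hMy s hsIcc)) hθ0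
      have h2 : 0 ≤ y s ^ (1 - 1/q) := Real.rpow_nonneg (hypos s hsIcc) _
      simp only [Pi.mul_apply]
      rw [norm_mul, Real.norm_eq_abs (y s ^ _), abs_of_nonneg h2]
      calc ‖F s‖ * y s ^ (1 - 1/q) ≤ ‖F s‖ * My ^ (1 - 1/q) :=
            mul_le_mul_of_nonneg_left h1 (norm_nonneg _)
        _ = My ^ (1 - 1/q) * ‖F s‖ := mul_comm _ _
    have hf2cont : Continuous (fun s => (C * G s + δ) ^ (q - 1)) :=
      ((continuous_const.mul hGc).add continuous_const).rpow_const
        (fun x => Or.inr (by linarith))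
    have hf2int : IntegrableOn (fun s => F s * (C * G s + δ) ^ (q - 1)) (Ioo 0 t₀) := by
      apply Integrable.mono' (hFIoo.norm.const_mul ((C * G T + δ) ^ (q - 1)))
        (hFIoo.aestronglyMeasurable.mul hf2cont.aestronglyMeasurable.restrict)
      filter_upwards [ae_restrict_mem measurableSet_Ioo] with s hs
      have hb0 : 0 ≤ C * G s + δ := by nlinarith [hGnn s hs.1.le]
      have h1 : (C * G s + δ) ^ (q - 1) ≤ (C * G T + δ) ^ (q - 1) := by
        apply Real.rpow_le_rpow hb0 _ (by linarith)
        have := hGmono (le_trans hs.2.le ht₀Icc.2)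
        nlinarith
      have h2 : 0 ≤ (C * G s + δ) ^ (q - 1) := Real.rpow_nonneg hb0 _
      simp only [Pi.mul_apply]
      rw [norm_mul, Real.norm_eq_abs ((C * G s + δ) ^ _), abs_of_nonneg h2]
      calc ‖F s‖ * (C * G s + δ) ^ (q - 1) ≤ ‖F s‖ * (C * G T + δ) ^ (q - 1) :=
            mul_le_mul_of_nonneg_left h1 (norm_nonneg _)
        _ = (C * G T + δ) ^ (q - 1) * ‖F s‖ := mul_comm _ _
    have hfunmeas : Measurable (fun x : ℝ => (C * max x 0 + δ) ^ (q - 1)) := by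
      have : Continuous (fun x : ℝ => (C * max x 0 + δ) ^ (q - 1)) :=
        ((continuous_const.mul (continuous_id.max continuous_const)).add
          continuous_const).rpow_const (fun x => Or.inr (by linarith))
      exact this.measurable
    have hchain : y t₀ < (C * G t₀ + δ) ^ q := by
      calc y t₀ ≤ C * q * ∫ s in (0:ℝ)..t₀, F s * y s ^ (1 - 1/q) := hineq t₀ ht₀Icc
        _ = C * q * ∫ s in Ioo 0 t₀, F s * y s ^ (1 - 1/q) := by
            rw [intervalIntegral.integral_of_le ht₀Icc.1, integral_Ioc_eq_integral_Ioo]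
        _ ≤ C * q * ∫ s in Ioo 0 t₀, F s * (C * G s + δ) ^ (q - 1) := by
            apply mul_le_mul_of_nonneg_left _ (by positivity)
            apply setIntegral_mono_on hf1int hf2int measurableSet_Ioo
            intro s hs
            have hsIcc : s ∈ Icc (0:ℝ) T := ⟨hs.1.le, hs.2.le.trans ht₀Icc.2⟩
            have hb0 : 0 ≤ C * G s + δ := by nlinarith [hGnn s hs.1.le]
            have h1 : y s ^ (1 - 1/q) ≤ (C * G s + δ) ^ (q - 1) := by
              calc y s ^ (1 - 1/q) ≤ ((C * G s + δ) ^ q) ^ (1 - 1/q) :=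
                    Real.rpow_le_rpow (hypos s hsIcc) (hlt s hs).le hθ0
                _ = (C * G s + δ) ^ (q * (1 - 1/q)) := by rw [← Real.rpow_mul hb0]
                _ = (C * G s + δ) ^ (q - 1) := by
                    congr 1
                    field_simp
            exact mul_le_mul_of_nonneg_left h1 (hFpos s ⟨hs.1, hsIcc.2⟩)
        _ = C * q * ∫ s in Ioc 0 t₀, F' s * (C * max (G s) 0 + δ) ^ (q - 1) := by
            rw [integral_Ioc_eq_integral_Ioo]
            congr 1
            apply setIntegral_congr_fun measurableSet_Ioo
            intro s hs
            have h1 : (Ioc 0 T).indicator F s = F s :=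
              indicator_of_mem (Set.mem_Ioc.2 ⟨hs.1, hs.2.le.trans ht₀Icc.2⟩) F
            have h2 : max (G s) 0 = G s := max_eq_left (hGnn s hs.1.le)
            simp only [h1, h2, hF'def]
        _ = C * q * ∫ x in Ioc 0 (G t₀), (C * max x 0 + δ) ^ (q - 1) := by
            congr 1
            exact integral_primitive hF'int hF'nn ht₀Icc.1 hfunmeas
        _ = C * q * ∫ x in Ioc 0 (G t₀), (C * x + δ) ^ (q - 1) := by
            congr 1
            apply setIntegral_congr_fun measurableSet_Ioc
            intro x hx
            simp only [max_eq_left hx.1.le]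
        _ = C * q * (((C * G t₀ + δ) ^ q - δ ^ q) / (C * q)) := by
            rw [integral_affine_rpow hC hδ hq (hGnn t₀ ht₀Icc.1)]
        _ = (C * G t₀ + δ) ^ q - δ ^ q := by field_simp
        _ < (C * G t₀ + δ) ^ q := by
            have : (0:ℝ) < δ ^ q := Real.rpow_pos_of_pos hδ q
            linarith
    exact absurd ht₀S (not_le.2 hchain)
  intro t ht
  rw [← hGF t ht]
  have hlim : Filter.Tendsto (fun δ : ℝ => (C * G t + δ) ^ q) (𝓝[>] 0)
      (𝓝 ((C * G t) ^ q)) := by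
    have h1 : Filter.Tendsto (fun δ : ℝ => C * G t + δ) (𝓝[>] 0) (𝓝 (C * G t)) := by
      have h2 : Filter.Tendsto (fun δ : ℝ => C * G t + δ) (𝓝 0) (𝓝 (C * G t + 0)) :=
        ((continuous_const (y := C * G t)).add continuous_id).tendsto 0
      rw [add_zero] at h2
      exact h2.mono_left nhdsWithin_le_nhds
    exact (Real.continuousAt_rpow_const (C * G t) q (Or.inr hq0.le)).tendsto.comp h1
  refine ge_of_tendsto hlim ?_
  filter_upwards [self_mem_nhdsWithin] with δ hδ
  exact key δ hδ t ht
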